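/- In the braid group B(A_n) with standard Artin generators σ_1, ..., σ_n, the band generators a_{ts} = (σ_{t-1}···σ_{s+1}) σ_s (σ_{t-1}···σ_{s+1})⁻¹ for n+1 ≥ t > s ≥ 1 satisfy: a_{ts} a_{sr} = a_{sr} a_{tr} = a_{tr} a_{ts} for all t > s > r. -/
import Mathlib


/-- The conjugating word `σ_{t-1} σ_{t-2} ⋯ σ_{s+1}`. -/
def bandWord {G : Type*} [Group G] (σ : ℕ → G) (t s : ℕ) : G :=
  (((List.range' (s + 1) (t - 1 - s)).reverse).map σ).prod

/-- The band generator `a_{ts} = (σ_{t-1}⋯σ_{s+1}) σ_s (σ_{t-1}⋯σ_{s+1})⁻¹`. -/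
def bandGen {G : Type*} [Group G] (σ : ℕ → G) (t s : ℕ) : G :=
  bandWord σ t s * σ s * (bandWord σ t s)⁻¹

section Aux

variable {G : Type*} [Group G]

/-- Anything commuting with all the letters of a band word commutes with the word. -/
lemma bw_comm (σ : ℕ → G) (t s : ℕ) (g : G)
    (h : ∀ i, s + 1 ≤ i → i ≤ t - 1 → Commute g (σ i)) :
    Commute g (bandWord σ t s) := by
  unfold bandWord
  apply Commute.list_prod_right
  intro x hx
  simp only [List.mem_map, List.mem_reverse] at hx
  obtain ⟨i, hi, rfl⟩ := hx
  rw [List.mem_range'_1] at hi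
  exact h i hi.1 (by omega)

/-- The empty band word. -/
lemma bw_triv (σ : ℕ → G) (s : ℕ) : bandWord σ (s + 1) s = 1 := by
  have h : s + 1 - 1 - s = 0 := by omega
  simp [bandWord, h]

/-- Peeling the leading letter off a band word. -/
lemma word_succ (σ : ℕ → G) (m r : ℕ) (h : r + 1 ≤ m) :
    bandWord σ (m + 1) r = σ m * bandWord σ m r := by
  unfold bandWord
  have h1 : m + 1 - 1 - r = (m - 1 - r) + 1 := by omega
  rw [h1, List.range'_concat]
  have h2 : r + 1 + 1 * (m - 1 - r) = m := by omega
  rw [h2]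
  simp

lemma bandGen_succ (σ : ℕ → G) (m r : ℕ) (h : r + 1 ≤ m) :
    bandGen σ (m + 1) r = σ m * bandGen σ m r * (σ m)⁻¹ := by
  unfold bandGen
  rw [word_succ σ m r h]
  group

/-- Splitting a band word at an intermediate index. -/
lemma word_split (σ : ℕ → G) (s r : ℕ) (h1 : r < s) :
    ∀ t, s < t → bandWord σ t r = bandWord σ t s * σ s * bandWord σ s r := by
  intro t ht
  induction t, ht using Nat.le_induction with
  | base =>
      rw [word_succ σ s r (by omega), bw_triv]
      group
  | succ t ht ih =>
      rw [word_succ σ t r (by omega), word_succ σ t s (by omega), ih]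
      group

/-- The key group-theoretic computation for the inductive step. -/
lemma conj_step (x y c : G) (hb : x * y * x = y * x * y) (hc : c * y = y * c)
    (hi : x * c * x = c * x * c) :
    y * (x * c * x⁻¹) * y = (x * c * x⁻¹) * y * (x * c * x⁻¹) := by
  have hconj : x⁻¹ * y * x = y * x * y⁻¹ := by
    calc x⁻¹ * y * x = x⁻¹ * (y * x * y) * y⁻¹ := by group
      _ = x⁻¹ * (x * y * x) * y⁻¹ := by rw [hb]
      _ = y * x * y⁻¹ := by group
  have hc2 : c * y⁻¹ = y⁻¹ * c := by
    calc c * y⁻¹ = y⁻¹ * (y * c) * y⁻¹ := by group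
      _ = y⁻¹ * (c * y) * y⁻¹ := by rw [hc]
      _ = y⁻¹ * c := by group
  calc y * (x * c * x⁻¹) * y
      = y * x * c * (x⁻¹ * y * x) * x⁻¹ := by group
    _ = y * x * c * (y * x * y⁻¹) * x⁻¹ := by rw [hconj]
    _ = y * x * (c * y) * (x * (y⁻¹ * x⁻¹)) := by group
    _ = y * x * (y * c) * (x * (y⁻¹ * x⁻¹)) := by rw [hc]
    _ = (y * x * y) * (c * (x * (y⁻¹ * x⁻¹))) := by group
    _ = (x * y * x) * (c * (x * (y⁻¹ * x⁻¹))) := by rw [hb]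
    _ = x * y * (x * c * x) * (y⁻¹ * x⁻¹) := by group
    _ = x * y * (c * x * c) * (y⁻¹ * x⁻¹) := by rw [hi]
    _ = x * (y * c) * (x * (c * (y⁻¹ * x⁻¹))) := by group
    _ = x * (c * y) * (x * (c * (y⁻¹ * x⁻¹))) := by rw [hc]
    _ = x * c * y * x * (c * y⁻¹) * x⁻¹ := by group
    _ = x * c * y * x * (y⁻¹ * c) * x⁻¹ := by rw [hc2]
    _ = x * c * (y * x * y⁻¹) * (c * x⁻¹) := by group
    _ = x * c * (x⁻¹ * y * x) * (c * x⁻¹) := by rw [← hconj]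
    _ = (x * c * x⁻¹) * y * (x * c * x⁻¹) := by group

/-- The final group-theoretic computation. -/
lemma final_step (W y b : G) (hWb : Commute W b) (K : y * b * y = b * y * b) :
    (W * y * W⁻¹) * b = b * (W * (y * b * y⁻¹) * W⁻¹) ∧
    b * (W * (y * b * y⁻¹) * W⁻¹) = (W * (y * b * y⁻¹) * W⁻¹) * (W * y * W⁻¹) := by
  have h1 : W⁻¹ * b = b * W⁻¹ := hWb.inv_left.eq
  have h2 : y * b = b * (y * b * y⁻¹) := by
    calc y * b = (y * b * y) * y⁻¹ := by group
      _ = (b * y * b) * y⁻¹ := by rw [K]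
      _ = b * (y * b * y⁻¹) := by group
  have hmid : b * (W * (y * b * y⁻¹) * W⁻¹) = W * (y * b) * W⁻¹ := by
    calc b * (W * (y * b * y⁻¹) * W⁻¹)
        = (b * W) * ((y * b * y⁻¹) * W⁻¹) := by group
      _ = (W * b) * ((y * b * y⁻¹) * W⁻¹) := by rw [hWb.eq]
      _ = W * (b * (y * b * y⁻¹)) * W⁻¹ := by group
      _ = W * (y * b) * W⁻¹ := by rw [← h2]
  constructor
  · calc (W * y * W⁻¹) * b = (W * y) * (W⁻¹ * b) := by group
      _ = (W * y) * (b * W⁻¹) := by rw [h1]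
      _ = W * (y * b) * W⁻¹ := by group
      _ = b * (W * (y * b * y⁻¹) * W⁻¹) := hmid.symm
  · calc b * (W * (y * b * y⁻¹) * W⁻¹) = W * (y * b) * W⁻¹ := hmid
      _ = (W * (y * b * y⁻¹) * W⁻¹) * (W * y * W⁻¹) := by group

/-- The key braid-type relation between `σ_s` and the band generator `a_{sr}`. -/
lemma key_braid (n : ℕ) (σ : ℕ → G)
    (hbraid : ∀ i, 1 ≤ i → i + 1 ≤ n → σ i * σ (i + 1) * σ i = σ (i + 1) * σ i * σ (i + 1))
    (hcomm : ∀ i j, 1 ≤ i → i + 2 ≤ j → j ≤ n → σ i * σ j = σ j * σ i) :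
    ∀ d r, 1 ≤ r → r + 1 + d ≤ n →
      σ (r + 1 + d) * bandGen σ (r + 1 + d) r * σ (r + 1 + d) =
      bandGen σ (r + 1 + d) r * σ (r + 1 + d) * bandGen σ (r + 1 + d) r := by
  intro d
  induction d with
  | zero =>
      intro r hr hn
      simp only [Nat.add_zero]
      have hW : bandWord σ (r + 1) r = 1 := bw_triv σ r
      simp only [bandGen, hW, one_mul, inv_one, mul_one]
      exact (hbraid r hr (by omega)).symm
  | succ d ih =>
      intro r hr hn
      have hE : r + 1 + (d + 1) = (r + 1 + d) + 1 := rfl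
      rw [hE]
      set s := r + 1 + d with hs
      rw [bandGen_succ σ s r (by omega)]
      apply conj_step
      · exact hbraid s (by omega) (by omega)
      · have hw : Commute (σ (s + 1)) (bandWord σ s r) := by
          apply bw_comm
          intro i hi1 hi2
          exact (hcomm i (s + 1) (by omega) (by omega) (by omega)).symm
        have hr' : Commute (σ (s + 1)) (σ r) :=
          (hcomm r (s + 1) hr (by omega) (by omega)).symm
        exact ((hw.mul_right hr').mul_right hw.inv_right).symm.eq
      · exact ih r hr (by omega)

end Aux

/-- In the braid group `B(A_n)` (realized in any group by elements `σ_1, …, σ_n` satisfying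
the Artin relations), the band generators satisfy
`a_{ts} a_{sr} = a_{sr} a_{tr} = a_{tr} a_{ts}` for all `t > s > r`. -/
theorem band_generators_dual_relations {G : Type*} [Group G] (n : ℕ) (σ : ℕ → G)
    (hbraid : ∀ i, 1 ≤ i → i + 1 ≤ n → σ i * σ (i + 1) * σ i = σ (i + 1) * σ i * σ (i + 1))
    (hcomm : ∀ i j, 1 ≤ i → i + 2 ≤ j → j ≤ n → σ i * σ j = σ j * σ i)
    (t s r : ℕ) (ht : t ≤ n + 1) (hts : s < t) (hsr : r < s) (hr : 1 ≤ r) :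
    bandGen σ t s * bandGen σ s r = bandGen σ s r * bandGen σ t r ∧
    bandGen σ s r * bandGen σ t r = bandGen σ t r * bandGen σ t s := by
  -- the key braid relation between σ_s and a_{sr}
  have hK := key_braid n σ hbraid hcomm (s - r - 1) r hr (by omega)
  rw [show r + 1 + (s - r - 1) = s by omega] at hK
  -- the band word for (t,s) commutes with everything built from σ_r, …, σ_{s-1}
  have hWσ : ∀ j, r ≤ j → j ≤ s - 1 → Commute (bandWord σ t s) (σ j) := by
    intro j hj1 hj2
    refine (bw_comm σ t s (σ j) ?_).symm
    intro i hi1 hi2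
    exact (hcomm j i (by omega) (by omega) (by omega))
  have hWV : Commute (bandWord σ t s) (bandWord σ s r) := by
    apply bw_comm
    intro i hi1 hi2
    exact hWσ i (by omega) (by omega)
  have hWr : Commute (bandWord σ t s) (σ r) := hWσ r le_rfl (by omega)
  have hWb : Commute (bandWord σ t s) (bandGen σ s r) := by
    unfold bandGen
    exact (hWV.mul_right hWr).mul_right hWV.inv_right
  -- express a_{tr} in terms of the band word for (t,s) and a_{sr}
  have hatr : bandGen σ t r =
      bandWord σ t s * (σ s * bandGen σ s r * (σ s)⁻¹) * (bandWord σ t s)⁻¹ := by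
    unfold bandGen
    rw [word_split σ s r hsr t hts]
    group
  have hats : bandGen σ t s = bandWord σ t s * σ s * (bandWord σ t s)⁻¹ := rfl
  rw [hats, hatr]
  exact final_step (bandWord σ t s) (σ s) (bandGen σ s r) hWb hK
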